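/- Let P be a probability measure on ℝ̄ with CDF F, quantile function R(t) := inf{x | F(x) ≥ t}, and set C := ℝ̄ \ R([0,1]). Then C is measurable and P(C) = 0; equivalently, R(F(x)) = x for P-almost all x ∈ ℝ̄. -/

import Mathlib

open MeasureTheory

/-- Any set all of whose points are right endpoints of null `Ioc` intervals is null. -/
lemma aux_null (P : Measure EReal) [IsFiniteMeasure P] (S : Set EReal)
    (hS : ∀ x ∈ S, ∃ y < x, P (Set.Ioc y x) = 0) : P S = 0 := by
  classical
  set U1 : Set EReal := ⋃ p : ℚ × ℚ,
    if P (Set.Ioc ((p.1 : ℝ) : EReal) ((p.2 : ℝ) : EReal)) = 0 then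
      Set.Ioc ((p.1 : ℝ) : EReal) ((p.2 : ℝ) : EReal) else ∅ with hU1
  set U2 : Set EReal := ⋃ q : ℚ,
    ({sSup {z | P (Set.Ioc ((q : ℝ) : EReal) z) = 0}} ∩ S) with hU2
  have hcover : S ⊆ U1 ∪ U2 := by
    intro x hx
    obtain ⟨y, hyx, hy0⟩ := hS x hx
    obtain ⟨q, hyq, hqx⟩ := EReal.exists_rat_btwn_of_lt hyx
    have hq0 : P (Set.Ioc ((q : ℝ) : EReal) x) = 0 :=
      le_antisymm (hy0 ▸ measure_mono (Set.Ioc_subset_Ioc_left hyq.le)) (zero_le)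
    set Z : Set EReal := {z | P (Set.Ioc ((q : ℝ) : EReal) z) = 0} with hZ
    have hxZ : x ∈ Z := hq0
    rcases eq_or_lt_of_le (le_sSup hxZ) with heq | hlt
    · right
      exact Set.mem_iUnion.2 ⟨q, ⟨Set.mem_singleton_iff.2 heq, hx⟩⟩
    · obtain ⟨z, hzZ, hxz⟩ := lt_sSup_iff.1 hlt
      obtain ⟨r, hxr, hrz⟩ := EReal.exists_rat_btwn_of_lt hxz
      left
      refine Set.mem_iUnion.2 ⟨(q, r), ?_⟩
      have hr0 : P (Set.Ioc ((q : ℝ) : EReal) ((r : ℝ) : EReal)) = 0 :=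
        le_antisymm (hzZ ▸ measure_mono (Set.Ioc_subset_Ioc_right hrz.le)) (zero_le)
      simp only [hr0, if_true]
      exact ⟨hqx, hxr.le⟩
  have hU1_0 : P U1 = 0 := by
    refine le_antisymm (le_trans (measure_iUnion_le _) ?_) (zero_le)
    refine le_of_eq (ENNReal.tsum_eq_zero.2 fun p => ?_)
    split_ifs with h
    · exact h
    · exact measure_empty
  have hU2_0 : P U2 = 0 := by
    refine le_antisymm (le_trans (measure_iUnion_le _) ?_) (zero_le)
    refine le_of_eq (ENNReal.tsum_eq_zero.2 fun q => ?_)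
    set m := sSup {z | P (Set.Ioc ((q : ℝ) : EReal) z) = 0} with hm
    by_cases hmS : m ∈ S
    · obtain ⟨y, hym, hy0⟩ := hS m hmS
      have : P {m} = 0 :=
        le_antisymm (hy0 ▸ measure_mono (by simp [Set.singleton_subset_iff, hym])) (zero_le)
      exact le_antisymm (le_trans (measure_mono Set.inter_subset_left) this.le) (zero_le)
    · have : ({m} : Set EReal) ∩ S = ∅ := by
        ext w; simp only [Set.mem_inter_iff, Set.mem_singleton_iff, Set.mem_empty_iff_false,
          iff_false, not_and]
        rintro rfl; exact hmS
      rw [this, measure_empty]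
  refine le_antisymm ?_ (zero_le)
  calc P S ≤ P (U1 ∪ U2) := measure_mono hcover
    _ ≤ P U1 + P U2 := measure_union_le _ _
    _ ≤ 0 := by rw [hU1_0, hU2_0, add_zero]

/-- For a probability measure `P` on `ℝ̄` with CDF `F` and quantile function
`R(t) = inf{x | F(x) ≥ t}`, the set `C = ℝ̄ \ R([0,1])` is measurable with `P(C) = 0`;
equivalently `R(F(x)) = x` for `P`-almost all `x`. -/
theorem stmt14 (P : Measure EReal) [IsProbabilityMeasure P]
    (F : EReal → ℝ) (hF : ∀ x, F x = (P (Set.Iic x)).toReal)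
    (R : ℝ → EReal) (hR : ∀ t, R t = sInf {x : EReal | t ≤ F x}) :
    MeasurableSet ((R '' Set.Icc (0 : ℝ) 1)ᶜ) ∧
    P ((R '' Set.Icc (0 : ℝ) 1)ᶜ) = 0 ∧
    ∀ᵐ x ∂P, R (F x) = x := by
  have hFmono : Monotone F := by
    intro a b hab
    rw [hF, hF]
    exact ENNReal.toReal_mono (measure_ne_top P _) (measure_mono (Set.Iic_subset_Iic.2 hab))
  have hRmono : Monotone R := by
    intro s t hst
    rw [hR, hR]
    exact sInf_le_sInf (fun z hz => le_trans hst hz)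
  have hF0 : ∀ x, 0 ≤ F x := fun x => by rw [hF]; exact ENNReal.toReal_nonneg
  have hF1 : ∀ x, F x ≤ 1 := by
    intro x
    rw [hF]
    calc (P (Set.Iic x)).toReal ≤ (P Set.univ).toReal :=
        ENNReal.toReal_mono (measure_ne_top P _) (measure_mono (Set.subset_univ _))
      _ = 1 := by simp
  have hRF_le : ∀ x, R (F x) ≤ x := by
    intro x
    rw [hR]
    exact sInf_le (le_refl (F x))
  -- right-continuity : t ≤ F (R t) for t ≤ 1
  have hFR_ge : ∀ t : ℝ, t ≤ 1 → t ≤ F (R t) := by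
    intro t ht
    rcases eq_or_lt_of_le (le_top : R t ≤ ⊤) with htop | hlt
    · rw [htop, hF]
      simpa using ht
    · have hz : ∀ z : EReal, R t < z → t ≤ F z := by
        intro z hz
        rw [hR] at hz
        obtain ⟨s, hs, hsz⟩ := sInf_lt_iff.1 hz
        exact le_trans hs (hFmono hsz.le)
      obtain ⟨u, hu_anti, hu_mem, hu_tendsto⟩ := exists_seq_strictAnti_tendsto' hlt
      have hIic : Set.Iic (R t) = ⋂ n, Set.Iic (u n) := by
        ext w
        simp only [Set.mem_Iic, Set.mem_iInter]
        constructor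
        · exact fun hw n => hw.trans (hu_mem n).1.le
        · exact fun hw => ge_of_tendsto' hu_tendsto hw
      have htend : Filter.Tendsto (fun n => P (Set.Iic (u n))) Filter.atTop
          (nhds (P (Set.Iic (R t)))) := by
        rw [hIic]
        exact tendsto_measure_iInter_atTop
          (fun n => measurableSet_Iic.nullMeasurableSet)
          (fun i j hij => Set.Iic_subset_Iic.2 ((hu_anti.antitone hij)))
          ⟨0, measure_ne_top P _⟩
      have htendR : Filter.Tendsto (fun n => (P (Set.Iic (u n))).toReal) Filter.atTop
          (nhds (P (Set.Iic (R t))).toReal) :=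
        (ENNReal.tendsto_toReal (measure_ne_top P _)).comp htend
      rw [hF]
      refine ge_of_tendsto' htendR (fun n => ?_)
      have := hz (u n) (hu_mem n).1
      rw [hF] at this
      exact this
  -- image equality
  have himage : R '' Set.Icc (0 : ℝ) 1 = {x | R (F x) = x} := by
    ext x
    constructor
    · rintro ⟨t, ht, rfl⟩
      exact le_antisymm (hRF_le _) (hRmono (hFR_ge t ht.2))
    · intro hx
      exact ⟨F x, ⟨hF0 x, hF1 x⟩, hx⟩
  have hcompl : (R '' Set.Icc (0 : ℝ) 1)ᶜ = {x | R (F x) < x} := by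
    rw [himage]
    ext x
    simp only [Set.mem_compl_iff, Set.mem_setOf_eq]
    exact ⟨fun h => lt_of_le_of_ne (hRF_le x) h, fun h => ne_of_lt h⟩
  have hmeas : MeasurableSet {x : EReal | R (F x) < x} :=
    measurableSet_lt ((hRmono.comp hFmono).measurable) measurable_id
  have hnull : P {x : EReal | R (F x) < x} = 0 := by
    refine aux_null P _ (fun x hx => ?_)
    simp only [Set.mem_setOf_eq] at hx
    rw [hR] at hx
    obtain ⟨y, hy, hyx⟩ := sInf_lt_iff.1 hx
    refine ⟨y, hyx, ?_⟩
    have hFeq : F y = F x := le_antisymm (hFmono hyx.le) hy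
    have hPeq : P (Set.Iic y) = P (Set.Iic x) := by
      rw [hF, hF] at hFeq
      exact (ENNReal.toReal_eq_toReal_iff' (measure_ne_top P _) (measure_ne_top P _)).1 hFeq
    have : Set.Ioc y x = Set.Iic x \ Set.Iic y := (Set.Iic_sdiff_Iic).symm
    rw [this, measure_diff (Set.Iic_subset_Iic.2 hyx.le)
      measurableSet_Iic.nullMeasurableSet (measure_ne_top P _), hPeq, tsub_self]
  refine ⟨hcompl ▸ hmeas, hcompl ▸ hnull, ?_⟩
  rw [ae_iff]
  have : {x : EReal | ¬ R (F x) = x} = {x | R (F x) < x} := by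
    ext x
    simp only [Set.mem_setOf_eq]
    exact ⟨fun h => lt_of_le_of_ne (hRF_le x) h, fun h => ne_of_lt h⟩
  rw [this, hnull]
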